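/- For α ∈ [0,1], the copula C_α = (1-α)C_FGM + α C_FU (with FGM parameter θ = -1) satisfies: C_α is NQDE if and only if α ≤ 1/4, and PQDE if and only if α ≥ 1/4. -/

import Mathlib

lemma int_min_aux (v : ℝ) (h0 : 0 ≤ v) (h1 : v ≤ 1) :
    (∫ u in (0:ℝ)..1, min u v) = v - v^2/2 := by
  have hc : Continuous fun u : ℝ => min u v := continuous_id.min continuous_const
  rw [← intervalIntegral.integral_add_adjacent_intervals (a := 0) (b := v) (c := 1)
      (hc.intervalIntegrable _ _) (hc.intervalIntegrable _ _)]
  have e1 : (∫ u in (0:ℝ)..v, min u v) = ∫ u in (0:ℝ)..v, u := by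
    apply intervalIntegral.integral_congr
    intro u hu
    rw [Set.uIcc_of_le h0] at hu
    exact min_eq_left hu.2
  have e2 : (∫ u in v..(1:ℝ), min u v) = ∫ u in v..(1:ℝ), v := by
    apply intervalIntegral.integral_congr
    intro u hu
    rw [Set.uIcc_of_le h1] at hu
    exact min_eq_right hu.1
  rw [e1, e2, integral_id, intervalIntegral.integral_const, smul_eq_mul]
  ring

lemma int_key (α v : ℝ) (h0 : 0 ≤ v) (h1 : v ≤ 1) :
    (∫ u in (0:ℝ)..1,
        ((1 - α) * (u * v * (1 - (1 - u) * (1 - v))) + α * min u v - u * v))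
      = v * (1 - v) / 2 * (4/3 * α - 1/3) := by
  set a : ℝ := (1 - α) * v / 2 - (1 - α) * v * (1 - v) / 2 - v / 2 with ha
  set b : ℝ := (1 - α) * v * (1 - v) / 3 with hb
  have hg : (∫ u in (0:ℝ)..1, ((1 - α) * (u * v * (1 - (1 - u) * (1 - v))) - u * v))
      = a + b := by
    have : (∫ u in (0:ℝ)..1, ((1 - α) * (u * v * (1 - (1 - u) * (1 - v))) - u * v))
        = (a * 1^2 + b * 1^3) - (a * 0^2 + b * 0^3) := by
      apply intervalIntegral.integral_eq_sub_of_hasDerivAt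
          (f := fun u => a * u^2 + b * u^3)
      · intro x hx
        have h : HasDerivAt (fun u => a * u^2 + b * u^3) (a * (((2:ℕ):ℝ) * x ^ (2 - 1)) + b * (((3:ℕ):ℝ) * x ^ (3 - 1))) x := (((hasDerivAt_pow 2 x).const_mul a).add ((hasDerivAt_pow 3 x).const_mul b))
        refine h.congr_deriv ?_
        simp [ha, hb]
        ring
      · apply Continuous.intervalIntegrable
        fun_prop
    rw [this]; ring
  have hadd : (∫ u in (0:ℝ)..1,
        ((1 - α) * (u * v * (1 - (1 - u) * (1 - v))) + α * min u v - u * v))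
      = (∫ u in (0:ℝ)..1, ((1 - α) * (u * v * (1 - (1 - u) * (1 - v))) - u * v))
        + α * ∫ u in (0:ℝ)..1, min u v := by
    rw [← intervalIntegral.integral_const_mul,
        ← intervalIntegral.integral_add (by apply Continuous.intervalIntegrable; fun_prop)
          (by apply Continuous.intervalIntegrable; fun_prop)]
    congr 1; funext u; ring
  rw [hadd, hg, int_min_aux v h0 h1, ha, hb]
  ring

/-- The FGM/Fréchet-upper convex combination is NQDE iff `α ≤ 1/4` and PQDE iff `α ≥ 1/4`. -/
theorem fgm_mix_nqde_pqde (α : ℝ) (hα : α ∈ Set.Icc (0:ℝ) 1) :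
    ((∀ v ∈ Set.Icc (0:ℝ) 1,
        (∫ u in (0:ℝ)..1,
          ((1 - α) * (u * v * (1 - (1 - u) * (1 - v))) + α * min u v - u * v)) ≤ 0)
      ↔ α ≤ 1/4)
    ∧
    ((∀ v ∈ Set.Icc (0:ℝ) 1,
        0 ≤ (∫ u in (0:ℝ)..1,
          ((1 - α) * (u * v * (1 - (1 - u) * (1 - v))) + α * min u v - u * v)))
      ↔ 1/4 ≤ α) := by
  constructor
  · constructor
    · intro h
      have h2 := h (1/2) (by constructor <;> norm_num)
      rw [int_key α (1/2) (by norm_num) (by norm_num)] at h2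
      nlinarith
    · intro hle v hv
      rw [int_key α v hv.1 hv.2]
      nlinarith [mul_nonneg (mul_nonneg hv.1 (by linarith [hv.2] : (0:ℝ) ≤ 1 - v)) (by linarith : (0:ℝ) ≤ 1/3 - 4/3*α)]
  · constructor
    · intro h
      have h2 := h (1/2) (by constructor <;> norm_num)
      rw [int_key α (1/2) (by norm_num) (by norm_num)] at h2
      nlinarith
    · intro hle v hv
      rw [int_key α v hv.1 hv.2]
      nlinarith [mul_nonneg (mul_nonneg hv.1 (by linarith [hv.2] : (0:ℝ) ≤ 1 - v)) (by linarith : (0:ℝ) ≤ 4/3*α - 1/3)]
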